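/- arXiv:1307.2429 — 2 statements merged into one kernel-verified Lean document; each statement's English description precedes it below -/
import Mathlib

section
/- Assume there is c > 0 such that Re⟨B₀φ, φ⟩ ≥ c‖φ‖² for all φ ∈ dom(D₀) ∩ dom(A) and Re⟨𝓜*(D₀*ψ) + 𝓝*ψ + A*ψ, ψ⟩ ≥ c‖ψ‖² for all ψ ∈ dom(D₀*) ∩ dom(A*), so that B₀ is closable with boundedly invertible closure B. Let F ⊆ dom(A) be a core for A (i.e., A is the closure of its restriction to F). Then the linear span 𝓕 of ⋃_{δ>0} R_δ[F] is contained in dom(D₀) ∩ dom(A) and is a core for B: the closure of the restriction of B to 𝓕 equals B. -/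
open Filter

/-- The operator `B₀` with domain `dom D₀ ⊓ dom A`, `B₀ u = D₀(𝓜 u) + 𝓝 u + A u`. -/
noncomputable def B0 {K : Type*} [NormedAddCommGroup K] [InnerProductSpace ℂ K]
    (D₀ A : K →ₗ.[ℂ] K) (Mc N : K →L[ℂ] K)
    (hM : ∀ u ∈ D₀.domain, Mc u ∈ D₀.domain) : K →ₗ.[ℂ] K where
  domain := D₀.domain ⊓ A.domain
  toFun :=
    D₀.toFun.comp (LinearMap.codRestrict D₀.domain
        ((Mc : K →ₗ[ℂ] K).comp (D₀.domain ⊓ A.domain).subtype)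
        (fun u => hM _ (Submodule.mem_inf.mp u.2).1))
    + (N : K →ₗ[ℂ] K).comp (D₀.domain ⊓ A.domain).subtype
    + A.toFun.comp (Submodule.inclusion inf_le_right)

lemma B0_apply {K : Type*} [NormedAddCommGroup K] [InnerProductSpace ℂ K]
    (D₀ A : K →ₗ.[ℂ] K) (Mc N : K →L[ℂ] K) (hM : ∀ u ∈ D₀.domain, Mc u ∈ D₀.domain)
    (φ : K) (hφ : φ ∈ D₀.domain ⊓ A.domain) :
    B0 D₀ A Mc N hM ⟨φ, hφ⟩ =
      D₀ ⟨Mc φ, hM φ (Submodule.mem_inf.mp hφ).1⟩ + N φ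
        + A ⟨φ, (Submodule.mem_inf.mp hφ).2⟩ := rfl

theorem stmt4
    {K : Type*} [NormedAddCommGroup K] [InnerProductSpace ℂ K] [CompleteSpace K]
    (D₀ : K →ₗ.[ℂ] K) (hD₀dense : Dense (D₀.domain : Set K)) (hD₀closed : D₀.IsClosed)
    (R : ℝ → K →L[ℂ] K)
    (hRdom : ∀ ε, 0 < ε → ∀ x : K, R ε x ∈ D₀.domain)
    (hRval : ∀ ε (hε : 0 < ε) (x : K),
      D₀ ⟨R ε x, hRdom ε hε x⟩ = ε⁻¹ • (x - R ε x))
    (hRinv : ∀ ε, 0 < ε → ∀ u : D₀.domain, R ε ((u : K) + ε • D₀ u) = u)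
    (hRnorm : ∀ ε, 0 < ε → ‖R ε‖ ≤ 1)
    (hRtendsto : ∀ x : K, Tendsto (fun ε => R ε x) (nhdsWithin 0 (Set.Ioi 0)) (nhds x))
    (hRadjdom : ∀ ε, 0 < ε → ∀ x : K,
      ContinuousLinearMap.adjoint (R ε) x ∈ D₀.adjoint.domain)
    (hRadjval : ∀ ε (hε : 0 < ε) (x : K),
      D₀.adjoint ⟨ContinuousLinearMap.adjoint (R ε) x, hRadjdom ε hε x⟩
        = ε⁻¹ • (x - ContinuousLinearMap.adjoint (R ε) x))
    (hRadjtendsto : ∀ x : K,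
      Tendsto (fun ε => ContinuousLinearMap.adjoint (R ε) x) (nhdsWithin 0 (Set.Ioi 0)) (nhds x))
    (Mc N Mop : K →L[ℂ] K)
    (hMdom : ∀ u ∈ D₀.domain, Mc u ∈ D₀.domain)
    (hMcomm : ∀ u : D₀.domain, Mc (D₀ u) = D₀ ⟨Mc u, hMdom u u.2⟩ + Mop u)
    (A : K →ₗ.[ℂ] K) (hAdense : Dense (A.domain : Set K)) (hAclosed : A.IsClosed)
    (hARdom : ∀ ε, 0 < ε → ∀ u ∈ A.domain, R ε u ∈ A.domain)
    (hARcomm : ∀ ε (hε : 0 < ε) (u : A.domain),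
      A ⟨R ε u, hARdom ε hε u u.2⟩ = R ε (A u))
    (c : ℝ) (hc : 0 < c)
    (hpos : ∀ (φ : K) (hφ : φ ∈ D₀.domain ⊓ A.domain),
      c * ‖φ‖ ^ 2 ≤ (inner ℂ (B0 D₀ A Mc N hMdom ⟨φ, hφ⟩) φ : ℂ).re)
    (hposadj : ∀ (ψ : K) (hψd : ψ ∈ D₀.adjoint.domain) (hψa : ψ ∈ A.adjoint.domain),
      c * ‖ψ‖ ^ 2 ≤ (inner ℂ (ContinuousLinearMap.adjoint Mc (D₀.adjoint ⟨ψ, hψd⟩)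
          + ContinuousLinearMap.adjoint N ψ + A.adjoint ⟨ψ, hψa⟩) ψ : ℂ).re)
    -- `F` is a core for `A`
    (F : Submodule ℂ K) (hF : F ≤ A.domain)
    (hFcore : (A.domRestrict F).closure = A) :
    (B0 D₀ A Mc N hMdom).IsClosable ∧
    Submodule.span ℂ (⋃ δ ∈ Set.Ioi (0 : ℝ), R δ '' (F : Set K)) ≤ D₀.domain ⊓ A.domain ∧
    ((B0 D₀ A Mc N hMdom).closure.domRestrict
        (Submodule.span ℂ (⋃ δ ∈ Set.Ioi (0 : ℝ), R δ '' (F : Set K)))).closure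
      = (B0 D₀ A Mc N hMdom).closure := by
  set B := B0 D₀ A Mc N hMdom with hBdef
  -- R ε commutes with D₀ on its domain
  have hRD : ∀ ε (hε : 0 < ε) (u : D₀.domain),
      R ε (D₀ u) = ε⁻¹ • ((u : K) - R ε (u : K)) := by
    intro ε hε u
    have h := hRinv ε hε u
    rw [map_add, ContinuousLinearMap.map_smul_of_tower] at h
    have h2 : ε • R ε (D₀ u) = (u : K) - R ε (u : K) := eq_sub_of_add_eq' h
    rw [← h2, inv_smul_smul₀ (ne_of_gt hε)]
  -- the key formula for B₀ (R δ f), f ∈ dom A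
  have hform : ∀ δ (hδ : 0 < δ) (f : K) (hf : f ∈ A.domain)
      (hmem : R δ f ∈ D₀.domain ⊓ A.domain),
      B ⟨R δ f, hmem⟩
        = δ⁻¹ • Mc (f - R δ f) - Mop (R δ f) + N (R δ f) + R δ (A ⟨f, hf⟩) := by
    intro δ hδ f hf hmem
    show B0 D₀ A Mc N hMdom ⟨R δ f, hmem⟩ = _
    rw [B0_apply]
    have h1 : A ⟨R δ f, (Submodule.mem_inf.mp hmem).2⟩ = R δ (A ⟨f, hf⟩) :=
      hARcomm δ hδ ⟨f, hf⟩
    have hc2 := hMcomm ⟨R δ f, hRdom δ hδ f⟩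
    rw [hRval δ hδ f] at hc2
    have h2 : D₀ ⟨Mc (R δ f), hMdom (R δ f) (Submodule.mem_inf.mp hmem).1⟩
        = δ⁻¹ • Mc (f - R δ f) - Mop (R δ f) := by
      rw [eq_sub_iff_add_eq, ← hc2, ContinuousLinearMap.map_smul_of_tower]
    rw [h1, h2]
  -- density of dom D₀ ⊓ dom A
  have hdense : Dense ((D₀.domain ⊓ A.domain : Submodule ℂ K) : Set K) := by
    have hsub : (A.domain : Set K)
        ⊆ closure ((D₀.domain ⊓ A.domain : Submodule ℂ K) : Set K) := by
      intro a ha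
      refine mem_closure_of_tendsto (hRtendsto a) ?_
      filter_upwards [self_mem_nhdsWithin] with δ hδ
      exact Submodule.mem_inf.mpr ⟨hRdom δ hδ a, hARdom δ hδ a ha⟩
    intro x
    exact closure_minimal hsub isClosed_closure (hAdense x)
  -- closability
  have hclos : B.IsClosable := by
    have hGprop : ∀ x : K × K, x ∈ B.graph.topologicalClosure → x.1 = 0 → x.2 = 0 := by
      rintro ⟨x1, y⟩ hxG hx1
      simp only at hx1
      subst hx1
      have hxc : ((0 : K), y) ∈ closure (B.graph : Set (K × K)) := hxG
      rcases mem_closure_iff_seq_limit.mp hxc with ⟨p, hp, hplim⟩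
      choose z hz1 hz2 using fun n => (LinearPMap.mem_graph_iff _).mp (hp n)
      have hfst : Tendsto (fun n => (p n).1) atTop (nhds (0 : K)) :=
        (continuous_fst.tendsto _).comp hplim
      have hsnd : Tendsto (fun n => (p n).2) atTop (nhds y) :=
        (continuous_snd.tendsto _).comp hplim
      have key : ∀ v : (D₀.domain ⊓ A.domain : Submodule ℂ K),
          (inner ℂ y (v : K) : ℂ) = 0 := by
        intro v
        set Bv : K := B ⟨(v : K), v.2⟩ with hBv
        have step : ∀ t : ℂ, c * ‖t • (v : K)‖ ^ 2
            ≤ (inner ℂ (y + t • Bv) (t • (v : K)) : ℂ).re := by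
          intro t
          have hn : ∀ n, c * ‖(p n).1 + t • (v : K)‖ ^ 2
              ≤ (inner ℂ ((p n).2 + t • Bv) ((p n).1 + t • (v : K)) : ℂ).re := by
            intro n
            have hvmem : (v : K) ∈ B.domain := v.2
            set w : B.domain := z n + t • (⟨(v : K), hvmem⟩ : B.domain) with hw
            have hcoe : (w : K) = (p n).1 + t • (v : K) := by
              simp [hw, hz1 n]
            have hval : B w = (p n).2 + t • Bv := by
              rw [hw, B.map_add, B.map_smul, hz2 n, hBv]
            have := hpos (w : K) w.2
            rw [Subtype.coe_eta, hval, hcoe] at this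
            exact this
          have l1 : Tendsto (fun n => c * ‖(p n).1 + t • (v : K)‖ ^ 2) atTop
              (nhds (c * ‖(0 : K) + t • (v : K)‖ ^ 2)) :=
            (((hfst.add tendsto_const_nhds).norm.pow 2).const_mul c)
          have l2 : Tendsto
              (fun n => (inner ℂ ((p n).2 + t • Bv) ((p n).1 + t • (v : K)) : ℂ).re) atTop
              (nhds (inner ℂ (y + t • Bv) ((0 : K) + t • (v : K)) : ℂ).re) :=
            (Complex.continuous_re.tendsto _).comp
              ((hsnd.add tendsto_const_nhds).inner (hfst.add tendsto_const_nhds))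
          have := le_of_tendsto_of_tendsto' l1 l2 hn
          simpa using this
        have main : ∀ w : ℂ, ‖w‖ = 1 → 0 ≤ (w * (inner ℂ y (v : K) : ℂ)).re := by
          intro w hw
          have hineq : ∀ s : ℝ, 0 < s →
              s * (c * ‖(v : K)‖ ^ 2 - (inner ℂ Bv (v : K) : ℂ).re)
                ≤ (w * (inner ℂ y (v : K) : ℂ)).re := by
            intro s hs
            have h := step ((s : ℂ) * w)
            have h1 : (starRingEnd ℂ) w * w = 1 := by
              rw [RCLike.conj_mul, hw]; norm_num
            have hconj : (starRingEnd ℂ) ((s : ℂ) * w) * ((s : ℂ) * w) = (s : ℂ) ^ 2 := by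
              rw [map_mul, Complex.conj_ofReal]
              calc (s : ℂ) * (starRingEnd ℂ) w * ((s : ℂ) * w)
                  = ((starRingEnd ℂ) w * w) * ((s : ℂ) * (s : ℂ)) := by ring
                _ = (s : ℂ) ^ 2 := by rw [h1]; ring
            have hnorm : ‖((s : ℂ) * w) • (v : K)‖ = s * ‖(v : K)‖ := by
              rw [norm_smul, norm_mul, hw, Complex.norm_real,
                Real.norm_of_nonneg hs.le, mul_one]
            have hexp : (inner ℂ (y + ((s : ℂ) * w) • Bv) (((s : ℂ) * w) • (v : K)) : ℂ)
                = (s : ℂ) * (w * (inner ℂ y (v : K) : ℂ))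
                  + (s : ℂ) ^ 2 * (inner ℂ Bv (v : K) : ℂ) := by
              rw [inner_smul_right, inner_add_left, inner_smul_left]
              linear_combination (inner ℂ Bv (v : K) : ℂ) * hconj
            have hsq : ((s : ℂ)) ^ 2 = ((s ^ 2 : ℝ) : ℂ) := by push_cast; ring
            rw [hnorm, hexp, hsq, Complex.add_re, Complex.re_ofReal_mul,
              Complex.re_ofReal_mul] at h
            have h2 : s * (s * (c * ‖(v : K)‖ ^ 2 - (inner ℂ Bv (v : K) : ℂ).re))
                ≤ s * (w * (inner ℂ y (v : K) : ℂ)).re := by nlinarith [h]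
            exact le_of_mul_le_mul_left h2 hs
          have hT : Tendsto
              (fun s : ℝ => s * (c * ‖(v : K)‖ ^ 2 - (inner ℂ Bv (v : K) : ℂ).re))
              (nhdsWithin 0 (Set.Ioi 0)) (nhds 0) := by
            have ht : Tendsto
                (fun s : ℝ => s * (c * ‖(v : K)‖ ^ 2 - (inner ℂ Bv (v : K) : ℂ).re))
                (nhds 0) (nhds (0 * (c * ‖(v : K)‖ ^ 2 - (inner ℂ Bv (v : K) : ℂ).re))) :=
              tendsto_id.mul_const _
            rw [zero_mul] at ht
            exact ht.mono_left nhdsWithin_le_nhds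
          refine le_of_tendsto hT ?_
          filter_upwards [self_mem_nhdsWithin] with s hs
          exact hineq s hs
        have h1 := main 1 (by simp)
        have h2 := main (-1) (by simp)
        have h3 := main Complex.I (by simp)
        have h4 := main (-Complex.I) (by simp)
        simp only [one_mul, neg_mul, Complex.neg_re, Complex.I_mul_re] at h1 h2 h3 h4
        apply Complex.ext <;> simp <;> linarith
      have hall : ∀ x : K, (inner ℂ y x : ℂ) = 0 := by
        have hco : Continuous fun x : K => (inner ℂ y x : ℂ) :=
          continuous_const.inner continuous_id
        have heq : (fun x : K => (inner ℂ y x : ℂ)) = fun _ => 0 :=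
          Continuous.ext_on hdense hco continuous_const fun x hx => key ⟨x, hx⟩
        exact fun x => congrFun heq x
      have := hall y
      rwa [inner_self_eq_zero] at this
    exact ⟨B.graph.topologicalClosure.toLinearPMap,
      (Submodule.toLinearPMap_graph_eq _ hGprop).symm⟩
  -- Part 2: the span is contained in dom D₀ ⊓ dom A
  have part2 : Submodule.span ℂ (⋃ δ ∈ Set.Ioi (0 : ℝ), R δ '' (F : Set K))
      ≤ D₀.domain ⊓ A.domain := by
    apply Submodule.span_le.mpr
    rintro x hx
    simp only [Set.mem_iUnion, Set.mem_image] at hx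
    obtain ⟨δ, hδ, f, hfF, rfl⟩ := hx
    exact Submodule.mem_inf.mpr ⟨hRdom δ hδ f, hARdom δ hδ f (hF hfF)⟩
  refine ⟨hclos, part2, ?_⟩
  -- Part 3: the span is a core for the closure of B₀
  set F' : Submodule ℂ K := Submodule.span ℂ (⋃ δ ∈ Set.Ioi (0 : ℝ), R δ '' (F : Set K))
    with hF'
  set Bc : K →ₗ.[ℂ] K := B.closure with hBc
  have hBcClosed : Bc.IsClosed := hclos.closure_isClosed
  have hBle : B ≤ Bc := B.le_closure
  have hTle : Bc.domRestrict F' ≤ Bc := LinearPMap.domRestrict_le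
  have hTclos : (Bc.domRestrict F').IsClosable := hBcClosed.isClosable.leIsClosable hTle
  apply LinearPMap.eq_of_eq_graph
  rw [← hTclos.graph_closure_eq_closure_graph]
  apply le_antisymm
  · have hTgr : (Bc.domRestrict F').graph ≤ B.graph.topologicalClosure := by
      rw [hclos.graph_closure_eq_closure_graph]
      exact LinearPMap.le_graph_of_le hTle
    rw [← hclos.graph_closure_eq_closure_graph]
    exact Submodule.topologicalClosure_minimal _ hTgr
      (Submodule.isClosed_topologicalClosure _)
  · rw [← hclos.graph_closure_eq_closure_graph]
    apply Submodule.topologicalClosure_minimal _ _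
      (Submodule.isClosed_topologicalClosure _)
    rintro ⟨x1, x2⟩ hx
    obtain ⟨z, hz1, hz2⟩ := (LinearPMap.mem_graph_iff _).mp hx
    simp only at hz1 hz2
    subst hz1; subst hz2
    obtain ⟨hzD, hzA⟩ := Submodule.mem_inf.mp z.2
    show ((z : K), B z) ∈ closure (((Bc.domRestrict F').graph : Set (K × K)))
    -- the approximating family
    have hmemcl : ∀ δ : ℝ, δ ∈ Set.Ioi (0 : ℝ) →
        ((R δ (z : K), Mc (R δ (D₀ ⟨(z : K), hzD⟩)) - Mop (R δ (z : K)) + N (R δ (z : K))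
          + R δ (A ⟨(z : K), hzA⟩)) : K × K)
          ∈ closure (((Bc.domRestrict F').graph : Set (K × K))) := by
      intro δ hδ
      -- approximate (z, A z) by the graph of A restricted to F
      have hAr : (A.domRestrict F).IsClosable :=
        hAclosed.isClosable.leIsClosable LinearPMap.domRestrict_le
      have hAgr : (A.domRestrict F).graph.topologicalClosure = A.graph := by
        rw [hAr.graph_closure_eq_closure_graph, hFcore]
      have hAz : ((z : K), A ⟨(z : K), hzA⟩)
          ∈ closure (((A.domRestrict F).graph : Set (K × K))) := by
        have hmem : ((z : K), A ⟨(z : K), hzA⟩) ∈ A.graph := A.mem_graph ⟨(z : K), hzA⟩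
        rw [← hAgr] at hmem
        exact hmem
      rcases mem_closure_iff_seq_limit.mp hAz with ⟨q, hq, hqlim⟩
      choose wq hw1 hw2 using fun n => (LinearPMap.mem_graph_iff _).mp (hq n)
      have hwF : ∀ n, ((wq n : K)) ∈ F := fun n => (Submodule.mem_inf.mp (wq n).2).1
      have hwA : ∀ n, ((wq n : K)) ∈ A.domain := fun n => (Submodule.mem_inf.mp (wq n).2).2
      have hmemF' : ∀ n, R δ (wq n : K) ∈ F' := by
        intro n
        apply Submodule.subset_span
        exact Set.mem_biUnion hδ (Set.mem_image_of_mem _ (hwF n))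
      have hmemB : ∀ n, R δ (wq n : K) ∈ B.domain := fun n =>
        Submodule.mem_inf.mpr ⟨hRdom δ hδ _, hARdom δ hδ _ (hwA n)⟩
      have hmemBc : ∀ n, R δ (wq n : K) ∈ Bc.domain := fun n => hBle.1 (hmemB n)
      have hmemT : ∀ n, R δ (wq n : K) ∈ (Bc.domRestrict F').domain := fun n =>
        Submodule.mem_inf.mpr ⟨hmemF' n, hmemBc n⟩
      -- value of the restricted operator
      have hval : ∀ n, (Bc.domRestrict F') ⟨R δ (wq n : K), hmemT n⟩
          = δ⁻¹ • Mc ((wq n : K) - R δ (wq n : K)) - Mop (R δ (wq n : K))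
            + N (R δ (wq n : K)) + R δ ((q n).2) := by
        intro n
        have e1 : (Bc.domRestrict F') ⟨R δ (wq n : K), hmemT n⟩
            = Bc ⟨R δ (wq n : K), hmemBc n⟩ := LinearPMap.domRestrict_apply rfl
        have e2 : Bc ⟨R δ (wq n : K), hmemBc n⟩ = B ⟨R δ (wq n : K), hmemB n⟩ :=
          (hBle.2 rfl).symm
        have e4 : A ⟨(wq n : K), hwA n⟩ = (q n).2 := by
          rw [← hw2 n]
          exact (LinearPMap.domRestrict_apply rfl).symm
        rw [e1, e2, hform δ hδ _ (hwA n) (hmemB n), e4]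
      -- the continuous map through which everything converges
      set Ψ : K × K → K × K := fun p =>
        (R δ p.1, δ⁻¹ • Mc (p.1 - R δ p.1) - Mop (R δ p.1) + N (R δ p.1) + R δ p.2)
        with hΨ
      have hΨc : Continuous Ψ := by
        apply Continuous.prodMk
        · exact (R δ).continuous.comp continuous_fst
        · refine Continuous.add (Continuous.add (Continuous.sub ?_ ?_) ?_) ?_
          · exact ((Mc.continuous.comp (continuous_fst.sub
              ((R δ).continuous.comp continuous_fst)))).const_smul _
          · exact Mop.continuous.comp ((R δ).continuous.comp continuous_fst)
          · exact N.continuous.comp ((R δ).continuous.comp continuous_fst)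
          · exact (R δ).continuous.comp continuous_snd
      have htend : Tendsto (fun n => Ψ (q n)) atTop
          (nhds (Ψ ((z : K), A ⟨(z : K), hzA⟩))) :=
        (hΨc.tendsto _).comp hqlim
      have hΨz : Ψ ((z : K), A ⟨(z : K), hzA⟩)
          = (R δ (z : K), Mc (R δ (D₀ ⟨(z : K), hzD⟩)) - Mop (R δ (z : K))
            + N (R δ (z : K)) + R δ (A ⟨(z : K), hzA⟩)) := by
        rw [hΨ]
        simp only
        congr 2
        rw [hRD δ hδ ⟨(z : K), hzD⟩, ContinuousLinearMap.map_smul_of_tower]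
      rw [← hΨz]
      apply mem_closure_of_tendsto htend
      apply Eventually.of_forall
      intro n
      have : Ψ (q n) = (((⟨R δ (wq n : K), hmemT n⟩ : (Bc.domRestrict F').domain) : K),
          (Bc.domRestrict F') ⟨R δ (wq n : K), hmemT n⟩) := by
        rw [hΨ]
        simp only
        rw [hval n, ← hw1 n]
      rw [this]
      exact LinearPMap.mem_graph _ _
    -- now let δ → 0
    have hBz : B z = Mc (D₀ ⟨(z : K), hzD⟩) - Mop (z : K) + N (z : K)
        + A ⟨(z : K), hzA⟩ := by
      have hm := hMcomm ⟨(z : K), hzD⟩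
      have hd : D₀ ⟨Mc (z : K), hMdom (z : K) (Submodule.mem_inf.mp z.2).1⟩
          = Mc (D₀ ⟨(z : K), hzD⟩) - Mop (z : K) := by
        rw [eq_sub_iff_add_eq, ← hm]
      calc B z = B0 D₀ A Mc N hMdom ⟨(z : K), z.2⟩ := rfl
        _ = _ := (B0_apply D₀ A Mc N hMdom (z : K) z.2).trans (by rw [hd])
    have htendδ : Tendsto (fun δ : ℝ =>
        ((R δ (z : K), Mc (R δ (D₀ ⟨(z : K), hzD⟩)) - Mop (R δ (z : K)) + N (R δ (z : K))
          + R δ (A ⟨(z : K), hzA⟩)) : K × K))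
        (nhdsWithin 0 (Set.Ioi 0)) (nhds ((z : K), B z)) := by
      rw [hBz]
      apply Tendsto.prodMk_nhds (hRtendsto (z : K))
      refine Tendsto.add (Tendsto.add (Tendsto.sub ?_ ?_) ?_) ?_
      · exact (Mc.continuous.tendsto _).comp (hRtendsto _)
      · exact (Mop.continuous.tendsto _).comp (hRtendsto _)
      · exact (N.continuous.tendsto _).comp (hRtendsto _)
      · exact hRtendsto _
    have hfinal := mem_closure_of_tendsto htendδ
      (by filter_upwards [self_mem_nhdsWithin] with δ hδ; exact hmemcl δ hδ)
    rwa [closure_closure] at hfinal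
end

section
/- Let c > 0. Let T : dom(T) ⊆ L²_ν(ℝ;H) → L²_ν(ℝ;H) be a linear operator such that Re⟨Tu, 𝟙_{≤a}u⟩ ≥ c‖𝟙_{≤a}u‖² for all u ∈ dom(T) and all a ∈ ℝ. Let A : dom(A) ⊆ L²_ν(ℝ;H) → L²_ν(ℝ;H) be a linear operator that is monotone (Re⟨Au, u⟩ ≥ 0 for all u ∈ dom(A)), causal, satisfies 𝟙_{≤0}u ∈ dom(A) for all u ∈ dom(A), and commutes with all translations: for every b ∈ ℝ and u ∈ dom(A), τ_b u ∈ dom(A) and A(τ_b u) = τ_b(Au). Then for every a ∈ ℝ and every φ ∈ dom(T) ∩ dom(A): Re⟨Tφ + Aφ, 𝟙_{≤a}φ⟩ ≥ c‖𝟙_{≤a}φ‖². -/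
open MeasureTheory Filter

/-- The exponentially weighted measure `exp(-2νt) dt` on `ℝ`. -/
noncomputable def wMeasure (ν : ℝ) : Measure ℝ :=
  volume.withDensity fun t => ENNReal.ofReal (Real.exp (-2 * ν * t))

/-- Multiplication by the indicator function of `(-∞, a]` on `L²_ν(ℝ; H)`. -/
noncomputable def trunc {H : Type*} [NormedAddCommGroup H] (ν a : ℝ)
    (f : Lp H 2 (wMeasure ν)) : Lp H 2 (wMeasure ν) :=
  MemLp.toLp (Set.indicator (Set.Iic a) f) ((Lp.memLp f).indicator measurableSet_Iic)

section Aux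

variable {H : Type*} [NormedAddCommGroup H] [InnerProductSpace ℂ H] {ν : ℝ}

local notation "⟪" x ", " y "⟫" => @inner ℂ _ _ x y

lemma wDensity_measurable (ν : ℝ) :
    Measurable fun t : ℝ => (Real.exp (-2 * ν * t)).toNNReal :=
  (Real.measurable_exp.comp ((measurable_const_mul (-2 * ν)).comp measurable_id)).real_toNNReal

lemma wMeasure_eq (ν : ℝ) :
    wMeasure ν = volume.withDensity fun t => ((Real.exp (-2 * ν * t)).toNNReal : ENNReal) :=
  rfl

lemma ae_vol_to_w {α : Sort*} (ν : ℝ) {p : ℝ → Prop} (h : ∀ᵐ t ∂(volume : Measure ℝ), p t) :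
    ∀ᵐ t ∂(wMeasure ν), p t :=
  (withDensity_absolutelyContinuous _ _).ae_le h

lemma ae_w_to_vol (ν : ℝ) {p : ℝ → Prop} (h : ∀ᵐ t ∂(wMeasure ν), p t) :
    ∀ᵐ t ∂(volume : Measure ℝ), p t := by
  rw [wMeasure] at h
  rw [ae_withDensity_iff
    (show Measurable fun t : ℝ => ENNReal.ofReal (Real.exp (-2 * ν * t)) by fun_prop)] at h
  filter_upwards [h] with t ht
  exact ht (by positivity)

lemma trunc_coe (ν a : ℝ) (f : Lp H 2 (wMeasure ν)) :
    ⇑(trunc ν a f) =ᵐ[wMeasure ν] Set.indicator (Set.Iic a) ⇑f :=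
  MemLp.coeFn_toLp _

lemma ae_indicator_congr {a : ℝ} {μ : Measure ℝ} {f g : ℝ → H} (h : f =ᵐ[μ] g) :
    Set.indicator (Set.Iic a) f =ᵐ[μ] Set.indicator (Set.Iic a) g := by
  filter_upwards [h] with t ht
  by_cases hx : t ∈ Set.Iic a <;>
    simp [Set.indicator_of_mem, Set.indicator_of_notMem, hx, ht]

lemma trunc_sub (ν a : ℝ) (f g : Lp H 2 (wMeasure ν)) :
    trunc ν a (f - g) = trunc ν a f - trunc ν a g := by
  apply Lp.ext
  have h1 := trunc_coe ν a (f - g)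
  have h2 := trunc_coe ν a f
  have h3 := trunc_coe ν a g
  have h4 := Lp.coeFn_sub f g
  have h5 := Lp.coeFn_sub (trunc ν a f) (trunc ν a g)
  filter_upwards [h1, h2, h3, h4, h5, ae_indicator_congr (a := a) h4] with t ht1 ht2 ht3 ht4
    ht5 ht6
  rw [ht1, ht5, ht6, Pi.sub_apply, ht2, ht3]
  by_cases hx : t ∈ Set.Iic a <;> simp [hx]

lemma trunc_idem (ν a : ℝ) (f : Lp H 2 (wMeasure ν)) :
    trunc ν a (trunc ν a f) = trunc ν a f := by
  apply Lp.ext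
  have h1 := trunc_coe ν a (trunc ν a f)
  have h2 := trunc_coe ν a f
  filter_upwards [h1, h2, ae_indicator_congr (a := a) h2] with t ht1 ht2 ht3
  rw [ht1, ht3, Set.indicator_indicator, Set.inter_self, ← ht2]

lemma inner_trunc [CompleteSpace H] (ν a : ℝ) (f g : Lp H 2 (wMeasure ν)) :
    (⟪f, trunc ν a g⟫ : ℂ) = ⟪trunc ν a f, trunc ν a g⟫ := by
  rw [L2.inner_def, L2.inner_def]
  apply integral_congr_ae
  filter_upwards [trunc_coe ν a f, trunc_coe ν a g] with t h1 h2
  rw [h1, h2]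
  by_cases hx : t ∈ Set.Iic a <;>
    simp [Set.indicator_of_mem, Set.indicator_of_notMem, hx]

/-- The key translation identity. -/
lemma inner_trunc_translate [CompleteSpace H] (ν a : ℝ) (f g f' g' : Lp H 2 (wMeasure ν))
    (hf : ⇑f' =ᵐ[volume] fun t => f (t + a))
    (hg : ⇑g' =ᵐ[volume] fun t => g (t + a)) :
    (⟪f', trunc ν 0 g'⟫ : ℂ) = Real.exp (2 * ν * a) • ⟪f, trunc ν a g⟫ := by
  have hint : ∀ h : ℝ → ℂ, ∫ t, h t ∂(wMeasure ν)
      = ∫ t, (Real.exp (-2 * ν * t)).toNNReal • h t ∂volume := by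
    intro h
    rw [wMeasure_eq, integral_withDensity_eq_integral_smul (wDensity_measurable ν)]
  rw [L2.inner_def, L2.inner_def, hint, hint]
  have htr : ⇑(trunc ν 0 g') =ᵐ[volume]
      Set.indicator (Set.Iic (0 : ℝ)) (fun t => g (t + a)) := by
    filter_upwards [ae_w_to_vol ν (trunc_coe ν 0 g'), hg] with t h1 h2
    rw [h1]
    by_cases hx : t ∈ Set.Iic (0 : ℝ) <;>
      simp [Set.indicator_of_mem, Set.indicator_of_notMem, hx, h2]
  have htr2 : ⇑(trunc ν a g) =ᵐ[volume] Set.indicator (Set.Iic a) ⇑g :=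
    ae_w_to_vol ν (trunc_coe ν a g)
  have hL : (∫ t, (Real.exp (-2 * ν * t)).toNNReal • (⟪f' t, (trunc ν 0 g') t⟫ : ℂ) ∂volume)
      = ∫ t, Real.exp (2 * ν * a) •
          ((Real.exp (-2 * ν * (t + a))).toNNReal •
            (⟪f (t + a), Set.indicator (Set.Iic a) (⇑g) (t + a)⟫ : ℂ)) ∂volume := by
    apply integral_congr_ae
    filter_upwards [hf, htr] with t h1 h2
    rw [h1, h2]
    have hind : Set.indicator (Set.Iic (0 : ℝ)) (fun s => g (s + a)) t
        = Set.indicator (Set.Iic a) (⇑g) (t + a) := by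
      by_cases hx : t ≤ 0
      · have hx2 : t + a ≤ a := by linarith
        simp [Set.indicator_apply, hx, hx2]
      · have hx2 : ¬ t + a ≤ a := fun h => hx (by linarith)
        simp [Set.indicator_apply, hx, hx2]
    rw [hind]
    have e1 : ((Real.exp (-2 * ν * t)).toNNReal : ℝ) = Real.exp (-2 * ν * t) :=
      Real.coe_toNNReal _ (Real.exp_pos _).le
    have e2 : ((Real.exp (-2 * ν * (t + a))).toNNReal : ℝ) = Real.exp (-2 * ν * (t + a)) :=
      Real.coe_toNNReal _ (Real.exp_pos _).le
    rw [NNReal.smul_def, NNReal.smul_def, e1, e2, ← smul_assoc, smul_eq_mul,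
      ← Real.exp_add]
    ring_nf
  rw [hL, integral_smul]
  congr 1
  rw [integral_add_right_eq_self
    (fun s => (Real.exp (-2 * ν * s)).toNNReal • (⟪f s, Set.indicator (Set.Iic a) (⇑g) s⟫ : ℂ)) a]
  apply integral_congr_ae
  filter_upwards [htr2] with t ht
  rw [ht]

end Aux

/-- If `T` satisfies the truncated positivity estimate and `A` is
monotone, causal, invariant under the truncation `𝟙_{≤0}` and commutes with all
translations, then `T + A` satisfies the truncated positivity estimate. -/
theorem stmt6
    {H : Type*} [NormedAddCommGroup H] [InnerProductSpace ℂ H] [CompleteSpace H]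
    (ν : ℝ) (hν : 0 < ν) (c : ℝ) (hc : 0 < c)
    (T : Lp H 2 (wMeasure ν) →ₗ.[ℂ] Lp H 2 (wMeasure ν))
    (hT : ∀ (u : Lp H 2 (wMeasure ν)) (hu : u ∈ T.domain) (a : ℝ),
      c * ‖trunc ν a u‖ ^ 2 ≤ (inner ℂ (T ⟨u, hu⟩) (trunc ν a u) : ℂ).re)
    (A : Lp H 2 (wMeasure ν) →ₗ.[ℂ] Lp H 2 (wMeasure ν))
    -- `A` is monotone
    (hAmono : ∀ u : A.domain, 0 ≤ (inner ℂ (A u) (u : Lp H 2 (wMeasure ν)) : ℂ).re)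
    -- `A` is causal
    (hAcausal : ∀ (a : ℝ) (u : Lp H 2 (wMeasure ν)) (hu : u ∈ A.domain),
      trunc ν a u = 0 → trunc ν a (A ⟨u, hu⟩) = 0)
    -- `𝟙_{≤0}` leaves the domain of `A` invariant
    (hA0 : ∀ u ∈ A.domain, trunc ν 0 u ∈ A.domain)
    -- `A` commutes with all translations `τ_b`
    (hAtrans : ∀ (b : ℝ) (u : Lp H 2 (wMeasure ν)) (hu : u ∈ A.domain),
      ∃ (v : Lp H 2 (wMeasure ν)) (hv : v ∈ A.domain),
        ⇑v =ᵐ[volume] (fun t => u (t + b)) ∧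
        ⇑(A ⟨v, hv⟩) =ᵐ[volume] (fun t => (A ⟨u, hu⟩) (t + b))) :
    ∀ (a : ℝ) (φ : Lp H 2 (wMeasure ν)) (hφT : φ ∈ T.domain) (hφA : φ ∈ A.domain),
      c * ‖trunc ν a φ‖ ^ 2 ≤ (inner ℂ (T ⟨φ, hφT⟩ + A ⟨φ, hφA⟩) (trunc ν a φ) : ℂ).re := by
  intro a φ hφT hφA
  rw [inner_add_left, Complex.add_re]
  have h1 := hT φ hφT a
  suffices h2 : 0 ≤ (inner ℂ (A ⟨φ, hφA⟩) (trunc ν a φ) : ℂ).re by linarith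
  obtain ⟨v, hv, hv1, hv2⟩ := hAtrans a φ hφA
  have hw : trunc ν 0 v ∈ A.domain := hA0 v hv
  set w : Lp H 2 (wMeasure ν) := trunc ν 0 v with hwdef
  -- causality gives `trunc ν 0 (A v) = trunc ν 0 (A w)`
  have hvw : v - w ∈ A.domain := sub_mem hv hw
  have hsub0 : trunc ν 0 (v - w) = 0 := by
    rw [trunc_sub, hwdef, trunc_idem, sub_self]
  have hc0 : trunc ν 0 (A ⟨v - w, hvw⟩) = 0 := hAcausal 0 _ hvw hsub0
  have hAsub : A ⟨v - w, hvw⟩ = A ⟨v, hv⟩ - A ⟨w, hw⟩ := by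
    have : (⟨v - w, hvw⟩ : A.domain) = ⟨v, hv⟩ - ⟨w, hw⟩ := rfl
    rw [this, A.map_sub]
  have htrAvw : trunc ν 0 (A ⟨v, hv⟩) = trunc ν 0 (A ⟨w, hw⟩) := by
    have := hc0
    rw [hAsub, trunc_sub, sub_eq_zero] at this
    exact this
  -- positivity of `⟪A v, trunc ν 0 v⟫`
  have hpos : 0 ≤ (inner ℂ (A ⟨v, hv⟩) (trunc ν 0 v) : ℂ).re := by
    have hchain : (inner ℂ (A ⟨v, hv⟩) (trunc ν 0 v) : ℂ)
        = inner ℂ (A ⟨(w : Lp H 2 (wMeasure ν)), hw⟩) w := by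
      calc (inner ℂ (A ⟨v, hv⟩) (trunc ν 0 v) : ℂ)
          = inner ℂ (trunc ν 0 (A ⟨v, hv⟩)) (trunc ν 0 v) := inner_trunc ν 0 _ _
        _ = inner ℂ (trunc ν 0 (A ⟨w, hw⟩)) (trunc ν 0 v) := by rw [htrAvw]
        _ = inner ℂ (A ⟨(w : Lp H 2 (wMeasure ν)), hw⟩) (trunc ν 0 v) :=
            (inner_trunc ν 0 _ _).symm
    rw [hchain]
    exact hAmono ⟨w, hw⟩
  -- translation identity
  have hkey := inner_trunc_translate ν a (A ⟨φ, hφA⟩) φ (A ⟨v, hv⟩) v hv2 hv1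
  rw [hkey, Complex.smul_re] at hpos
  simp only [smul_eq_mul] at hpos
  nlinarith [Real.exp_pos (2 * ν * a), hpos]
end
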